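/- Let X be an abelian group with automorphism t : X → X such that 1−t is also an automorphism. Let G be the quotient of the free abelian group ℤ⟨X×X⟩ by the subgroup generated by the elements (a,(1−t)a), (a,0), (0,a) for all a ∈ X, and the elements (x,z) − (x,y) − (tx+y, z) + (tx+z, ty+(1−t)z) for all x,y,z ∈ X; write [a,b] for the class of (a,b) in G. Then [x, −t x] = [x, z] + [−x, t x + z] in G for all x, z ∈ X. -/
import Mathlib

set_option maxHeartbeats 1000000


open FreeAbelianGroup TensorProduct

/-- **Lemma.** In the group `G` (the quotient of `ℤ⟨X × X⟩` by the stated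
relations, with bracket `br a b = [a, b]`), one has `[x, -t x] = [x, z] + [-x, t x + z]`. -/
theorem bracket_splitting_relation
    {X : Type*} [AddCommGroup X] (t : X ≃+ X)
    (ht : Function.Bijective fun x : X => x - t x)
    (Rel : AddSubgroup (FreeAbelianGroup (X × X)))
    (hRel : Rel = AddSubgroup.closure
      ({z | ∃ a : X, z = of (a, a - t a)} ∪ {z | ∃ a : X, z = of (a, (0 : X))} ∪
        {z | ∃ a : X, z = of ((0 : X), a)} ∪
        {z | ∃ x y w : X, z = of (x, w) - of (x, y) - of (t x + y, w)
          + of (t x + w, t y + (w - t w))}))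
    (br : X → X → FreeAbelianGroup (X × X) ⧸ Rel)
    (hbr : ∀ a b : X, br a b = QuotientAddGroup.mk (of (a, b)))
    : ∀ x z : X, br x (-(t x)) = br x z + br (-x) (t x + z) := by
  intro x z
  have hr4 : ∀ a b c : X,
      of (a, c) - of (a, b) - of (t a + b, c) + of (t a + c, t b + (c - t c)) ∈ Rel := by
    intro a b c
    rw [hRel]
    exact AddSubgroup.subset_closure (Or.inr ⟨a, b, c, rfl⟩)
  have hr3 : ∀ a : X, of ((0 : X), a) ∈ Rel := by
    intro a
    rw [hRel]
    exact AddSubgroup.subset_closure (Or.inl (Or.inr ⟨a, rfl⟩))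
  rw [hbr, hbr, hbr]
  rw [← QuotientAddGroup.mk_add, QuotientAddGroup.eq]
  have A1 := hr4 x z (-(t x))
  have A2 := hr3 z
  have A3 := hr4 0 (t (t x) - t x + t z) z
  have A4 := hr4 (t x + z) (-(t x)) z
  have A5 := hr4 (t x + z) z (z - t (t x) - t z)
  have A6 := hr4 0 (-x) (t x + z)
  have A7 := hr3 (t x + z)
  have A8 := hr3 (-x)
  have key : -of (x, -(t x)) + (of (x, z) + of (-x, t x + z)) =
      -(of (x, -(t x)) - of (x, z) - of (t x + z, -(t x))
          + of (t x + -(t x), t z + (-(t x) - t (-(t x)))))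
      + of ((0 : X), z)
      - (of ((0 : X), z) - of ((0 : X), t (t x) - t x + t z)
          - of (t (0 : X) + (t (t x) - t x + t z), z)
          + of (t (0 : X) + z, t (t (t x) - t x + t z) + (z - t z)))
      + (of (t x + z, z) - of (t x + z, -(t x)) - of (t (t x + z) + -(t x), z)
          + of (t (t x + z) + z, t (-(t x)) + (z - t z)))
      + (of (t x + z, z - t (t x) - t z) - of (t x + z, z)
          - of (t (t x + z) + z, z - t (t x) - t z)
          + of (t (t x + z) + (z - t (t x) - t z),
              t z + ((z - t (t x) - t z) - t (z - t (t x) - t z))))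
      - (of ((0 : X), t x + z) - of ((0 : X), -x) - of (t (0 : X) + -x, t x + z)
          + of (t (0 : X) + (t x + z), t (-x) + ((t x + z) - t (t x + z))))
      + of ((0 : X), t x + z)
      - of ((0 : X), -x) := by
    rw [show t (t x + z) + (z - t (t x) - t z) = z from by
      simp only [map_add]; abel]
    simp only [map_add, map_neg, map_sub, map_zero, zero_add, neg_neg, add_neg_cancel]
    abel_nf
  rw [key]
  exact sub_mem (add_mem (sub_mem (add_mem (add_mem (sub_mem (add_mem (neg_mem A1) A2) A3) A4) A5)
    A6) A7) A8
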